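/- Let M = (E, ℐ) be a matroid of rank at most r+s that is representable over some field, and let 𝒴 be a collection of s-element independent sets of M. Then there exists a subfamily 𝒴̂ ⊆ 𝒴 with |𝒴̂| ≤ binom(r+s, s) that represents 𝒴 in M: for every independent set X of M, if some Y ∈ 𝒴 extends X in M, then some Y' ∈ 𝒴̂ extends X in M. -/

import Mathlib

open Finset

variable {V : Type}

/-- Total capacity of a terminal set: sum of degrees. -/
def capacity [Fintype V] (G : SimpleGraph V) [DecidableRel G.Adj] (T : Finset V) : ℕ :=
  ∑ t ∈ T, G.degree t

/-- `P` is a partition of the set `T` into nonempty parts. -/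
def IsPartitionOn (T : Set V) (P : Set (Set V)) : Prop :=
  (∀ p ∈ P, p.Nonempty ∧ p ⊆ T) ∧ ∀ t ∈ T, ∃! p, p ∈ P ∧ t ∈ p

/-- `X` is a multiway cut for the partition `P` in `G`: no component of `G - X`
contains terminals from two distinct parts. -/
def IsMultiwayCut (G : SimpleGraph V) (P : Set (Set V)) (X : Finset (Sym2 V)) : Prop :=
  ↑X ⊆ G.edgeSet ∧ ∀ u v : V, ∀ p ∈ P, ∀ q ∈ P, u ∈ p → v ∈ q →
    (G.deleteEdges ↑X).Reachable u v → p = q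

def IsMinMultiwayCut (G : SimpleGraph V) (P : Set (Set V)) (X : Finset (Sym2 V)) : Prop :=
  IsMultiwayCut G P X ∧ ∀ Y : Finset (Sym2 V), IsMultiwayCut G P Y → X.card ≤ Y.card

/-- `R` is a set of cut requests over `T`: unordered pairs of distinct terminals. -/
def CutRequests (T : Set V) (R : Set (Sym2 V)) : Prop :=
  ∀ r ∈ R, ¬ r.IsDiag ∧ ∀ v ∈ r, v ∈ T

/-- `X` is a multicut for the requests `R` in `G`. -/
def IsMulticut (G : SimpleGraph V) (R : Set (Sym2 V)) (X : Finset (Sym2 V)) : Prop :=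
  ↑X ⊆ G.edgeSet ∧ ∀ u v : V, s(u, v) ∈ R → ¬ (G.deleteEdges ↑X).Reachable u v

def IsMinMulticut (G : SimpleGraph V) (R : Set (Sym2 V)) (X : Finset (Sym2 V)) : Prop :=
  IsMulticut G R X ∧ ∀ Y : Finset (Sym2 V), IsMulticut G R Y → X.card ≤ Y.card

/-- An edge is essential for `(G,T)` if for some set of cut requests over `T`,
every minimum multicut contains it. -/
def Essential (G : SimpleGraph V) (T : Set V) (e : Sym2 V) : Prop :=
  ∃ R : Set (Sym2 V), CutRequests T R ∧ ∀ X : Finset (Sym2 V), IsMinMulticut G R X → e ∈ X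

/-- The edge boundary of `S`: edges with exactly one endpoint in `S`. -/
def edgeBoundary [Fintype V] [DecidableEq V] (G : SimpleGraph V) [DecidableRel G.Adj]
    (S : Finset V) : Finset (Sym2 V) :=
  G.edgeFinset.filter (fun e => ∃ u v : V, e = s(u, v) ∧ u ∈ S ∧ v ∉ S)

/-- `cap_T(S) = cap_G(T ∩ S) + δ_G(S)`. -/
def capT [Fintype V] [DecidableEq V] (G : SimpleGraph V) [DecidableRel G.Adj]
    (T S : Finset V) : ℕ :=
  capacity G (T ∩ S) + (edgeBoundary G S).card

/-- `X` is an `(A,B)`-edge cut in `G`. -/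
def IsEdgeCut (G : SimpleGraph V) (A B : Finset V) (X : Finset (Sym2 V)) : Prop :=
  ↑X ⊆ G.edgeSet ∧ ∀ a ∈ A, ∀ b ∈ B, ¬ (G.deleteEdges ↑X).Reachable a b

def IsMinEdgeCut (G : SimpleGraph V) (A B : Finset V) (X : Finset (Sym2 V)) : Prop :=
  IsEdgeCut G A B X ∧ ∀ Y : Finset (Sym2 V), IsEdgeCut G A B Y → X.card ≤ Y.card


/-- The closed neighborhood `N_G[S]`. -/
def closedNbhd (G : SimpleGraph V) (S : Set V) : Set V :=
  S ∪ {v | ∃ u ∈ S, G.Adj u v}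

/-- The (exterior) open neighborhood `N_G(S)`. -/
def extNbhd [Fintype V] [DecidableEq V] (G : SimpleGraph V) [DecidableRel G.Adj]
    (S : Finset V) : Finset V :=
  Finset.univ.filter (fun v => v ∉ S ∧ ∃ u ∈ S, G.Adj u v)

/-- The graph `G_S`: the edges of `G` with at least one endpoint in `S`
(vertices outside `N_G[S]` are isolated). -/
def recGraph [DecidableEq V] (G : SimpleGraph V) (S : Finset V) : SimpleGraph V where
  Adj u v := G.Adj u v ∧ (u ∈ S ∨ v ∈ S)
  symm := by constructor; intro u v h; exact ⟨h.1.symm, h.2.symm⟩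
  loopless := by constructor; intro v h; exact (G.ne_of_adj h.1) rfl

instance [DecidableEq V] (G : SimpleGraph V) [DecidableRel G.Adj] (S : Finset V) :
    DecidableRel (recGraph G S).Adj :=
  fun u v => inferInstanceAs (Decidable (G.Adj u v ∧ (u ∈ S ∨ v ∈ S)))

/-- The terminal set `T(S) = (T ∩ S) ∪ N_G(S)` of the recursive instance at `S`. -/
def recTerminals [Fintype V] [DecidableEq V] (G : SimpleGraph V) [DecidableRel G.Adj]
    (T S : Finset V) : Finset V :=
  (T ∩ S) ∪ extNbhd G S

/-- An indexed partition `T = T_1 ∪ ... ∪ T_s` of `T` into nonempty disjoint parts. -/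
def IsIndexedPartition [DecidableEq V] (T : Finset V) {s : ℕ} (Tp : Fin s → Finset V) : Prop :=
  (∀ i, (Tp i).Nonempty) ∧ (∀ i j, i ≠ j → Disjoint (Tp i) (Tp j)) ∧
    Finset.univ.biUnion Tp = T

def IsMultiwayCutFam (G : SimpleGraph V) {s : ℕ} (Tp : Fin s → Finset V)
    (X : Finset (Sym2 V)) : Prop :=
  ↑X ⊆ G.edgeSet ∧ ∀ i j : Fin s, i ≠ j → ∀ u ∈ Tp i, ∀ v ∈ Tp j,
    ¬ (G.deleteEdges ↑X).Reachable u v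

/-- The set `E(T,V)` of edges incident to at least one terminal. -/
def terminalEdges [Fintype V] [DecidableEq V] (G : SimpleGraph V) [DecidableRel G.Adj]
    (T : Finset V) : Finset (Sym2 V) :=
  G.edgeFinset.filter (fun e => ∃ t ∈ T, t ∈ e)

/-- Independence of the columns indexed by the finite set `X` in the
linear representation `v`. -/
def FIndep (F : Type) [Field F] {W E : Type} [AddCommGroup W] [Module F W]
    (v : E → W) (X : Finset E) : Prop :=
  LinearIndependent F (fun x : {a // a ∈ X} => v x.1)


namespace RepAux

open ExteriorAlgebra

variable {F : Type} [Field F] {W : Type} [AddCommGroup W] [Module F W]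

/-- Wedge product of the images of a list of indices. -/
noncomputable def lw (F : Type) [Field F] {W : Type} [AddCommGroup W] [Module F W]
    {E : Type} (v : E → W) (l : List E) : ExteriorAlgebra F W :=
  (l.map fun e => ι F (v e)).prod

theorem lw_append {E : Type} (v : E → W) (l₁ l₂ : List E) :
    lw F v (l₁ ++ l₂) = lw F v l₁ * lw F v l₂ := by
  simp [lw]

theorem lw_eq_iMulti {E : Type} (v : E → W) (l : List E) :
    lw F v l = ιMulti F l.length (fun i => v (l.get i)) := by
  conv_lhs => rw [lw, ← List.ofFn_get l]
  rw [List.map_ofFn, ιMulti_apply]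
  rfl

theorem iMulti_cast {m n : ℕ} (h : m = n) (f : Fin n → W) :
    ιMulti F m (fun i => f (Fin.cast h i)) = ιMulti F n f := by
  subst h; rfl

theorem exists_comp_perm {n : ℕ} {D : Type*} {k₁ k₂ : Fin n → D}
    (h₁ : Function.Injective k₁) (h₂ : Function.Injective k₂)
    (hr : Set.range k₁ = Set.range k₂) : ∃ σ : Equiv.Perm (Fin n), k₁ = k₂ ∘ σ := by
  refine ⟨(Equiv.ofInjective k₁ h₁).trans ((Equiv.setCongr hr).trans
    (Equiv.ofInjective k₂ h₂).symm), ?_⟩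
  funext i
  simp only [Function.comp_apply, Equiv.trans_apply]
  have h := (Equiv.ofInjective k₂ h₂).apply_symm_apply
    ((Equiv.setCongr hr) (Equiv.ofInjective k₁ h₁ i))
  have := congrArg Subtype.val h
  simp only [Equiv.ofInjective_apply] at this ⊢
  rw [this]; rfl

theorem iMulti_comp_perm_congr {n : ℕ} {D : Type} (u : D → W) {k₁ k₂ : Fin n → D}
    (h₁ : Function.Injective k₁) (h₂ : Function.Injective k₂)
    (hr : Set.range k₁ = Set.range k₂) :
    ∃ c : ℤˣ, ιMulti F n (fun i => u (k₁ i)) = c • ιMulti F n (fun i => u (k₂ i)) := by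
  obtain ⟨σ, hσ⟩ := exists_comp_perm h₁ h₂ hr
  refine ⟨Equiv.Perm.sign σ, ?_⟩
  have h := AlternatingMap.map_perm (ιMulti F n (M := W)) (fun i => u (k₂ i)) σ
  have he : ((fun i => u (k₂ i)) ∘ σ) = fun i => u (k₁ i) := by funext i; rw [hσ]; rfl
  rw [he] at h; exact h

theorem lw_perm {E : Type} (v : E → W) {l₁ l₂ : List E} (h : l₁.Perm l₂) (hnd : l₁.Nodup) :
    ∃ c : ℤˣ, lw F v l₁ = c • lw F v l₂ := by
  have hl : l₁.length = l₂.length := h.length_eq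
  have hnd₂ : l₂.Nodup := (h.nodup_iff).mp hnd
  have h₁ : Function.Injective l₁.get := List.nodup_iff_injective_get.mp hnd
  have h₂ : Function.Injective (fun i : Fin l₁.length => l₂.get (Fin.cast hl i)) := by
    intro i j hij
    have := List.nodup_iff_injective_get.mp hnd₂ hij
    exact Fin.ext (by simpa using congrArg Fin.val this)
  have hr : Set.range l₁.get = Set.range (fun i : Fin l₁.length => l₂.get (Fin.cast hl i)) := by
    ext a
    constructor
    · rintro ⟨i, rfl⟩
      have ha : l₁.get i ∈ l₂ := h.mem_iff.mp (l₁.get_mem i)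
      obtain ⟨j, hj⟩ := List.mem_iff_get.mp ha
      exact ⟨Fin.cast hl.symm j, by simpa using hj⟩
    · rintro ⟨i, rfl⟩
      have ha : l₂.get (Fin.cast hl i) ∈ l₁ := h.symm.mem_iff.mp (l₂.get_mem _)
      obtain ⟨j, hj⟩ := List.mem_iff_get.mp ha
      exact ⟨j, hj⟩
  obtain ⟨c, hc⟩ := iMulti_comp_perm_congr (F := F) v h₁ h₂ hr
  refine ⟨c, ?_⟩
  rw [lw_eq_iMulti, hc, lw_eq_iMulti]
  congr 1
  exact iMulti_cast hl (fun i => v (l₂.get i))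


theorem lw_eq_iMulti_of_length {E : Type} (v : E → W) (l : List E) {n : ℕ}
    (h : l.length = n) :
    lw F v l = ιMulti F n (fun i => v (l.get (Fin.cast h.symm i))) := by
  subst h
  exact lw_eq_iMulti v l

theorem eq_zero_of_unit_smul {M : Type} [AddCommGroup M] (c : ℤˣ) {x : M}
    (h : c • x = 0) : x = 0 := by
  have h2 := congrArg (fun z => c⁻¹ • z) h
  simp only [inv_smul_smul, smul_zero] at h2
  exact h2

/-- Wedge product of the images of a finite set of indices (in sorted order). -/
noncomputable def wedge (F : Type) [Field F] {W : Type} [AddCommGroup W] [Module F W]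
    {E : Type} [LinearOrder E] (v : E → W) (X : Finset E) : ExteriorAlgebra F W :=
  lw F v (X.sort (· ≤ ·))

theorem wedge_mul_wedge {E : Type} [LinearOrder E] [DecidableEq E] (v : E → W) {X Y : Finset E}
    (h : Disjoint X Y) :
    ∃ c : ℤˣ, wedge F v X * wedge F v Y = c • wedge F v (X ∪ Y) := by
  simp only [wedge]
  rw [← lw_append]
  apply lw_perm
  · rw [← Multiset.coe_eq_coe, Finset.sort_eq,
      show ((X.sort (· ≤ ·) ++ Y.sort (· ≤ ·) : List E) : Multiset E)
        = (↑(X.sort (· ≤ ·)) + ↑(Y.sort (· ≤ ·)) : Multiset E) from rfl,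
      Finset.sort_eq, Finset.sort_eq, ← Finset.disjUnion_eq_union X Y h]
    rfl
  · rw [List.nodup_append]
    refine ⟨X.sort_nodup _, Y.sort_nodup _, fun a ha b hb hab => ?_⟩
    subst hab
    rw [Finset.mem_sort] at ha hb
    exact Finset.disjoint_left.mp h ha hb

theorem wedge_mul_wedge_eq_zero {E : Type} [LinearOrder E] (v : E → W) {X Y : Finset E}
    {a : E} (ha : a ∈ X) (hb : a ∈ Y) : wedge F v X * wedge F v Y = 0 := by
  rw [wedge, wedge, ← lw_append, lw_eq_iMulti]
  set l := X.sort (· ≤ ·) ++ Y.sort (· ≤ ·) with hl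
  have hnd : ¬ l.Nodup := by
    rw [hl, List.nodup_append]
    rintro ⟨-, -, hd⟩
    exact hd _ ((Finset.mem_sort _).mpr ha) _ ((Finset.mem_sort _).mpr hb) rfl
  have hni : ¬ Function.Injective l.get := fun hinj => hnd (List.nodup_iff_injective_get.mpr hinj)
  obtain ⟨i, j, hij, hne⟩ := Function.not_injective_iff.mp hni
  exact AlternatingMap.map_eq_zero_of_eq _ _ (congrArg v hij) hne

theorem iMulti_ne_zero {n : ℕ} {u : Fin n → W} (hu : LinearIndependent F u) :
    ιMulti F n u ≠ 0 := by
  classical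
  intro h0
  have hs : LinearIndepOn F id (Set.range u) := hu.linearIndepOn_id
  let B : Module.Basis (hs.extend (Set.subset_univ _)) F W := Module.Basis.extend hs
  have hmem : ∀ i, u i ∈ hs.extend (Set.subset_univ _) := fun i =>
    hs.subset_extend _ ⟨i, rfl⟩
  let idx : Fin n → hs.extend (Set.subset_univ _) := fun i => ⟨u i, hmem i⟩
  have hidx : Function.Injective idx := fun i j hij =>
    hu.injective (congrArg Subtype.val hij)
  let g : W →ₗ[F] (Fin n → F) := LinearMap.pi fun i => B.coord (idx i)
  let f : W [⋀^Fin n]→ₗ[F] F := (Matrix.detRowAlternating).compLinearMap g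
  have hfu : f u = 1 := by
    have hB : ∀ i, B (idx i) = u i := fun i => Module.Basis.extend_apply_self hs (idx i)
    have hmat : (fun i => g (u i)) = (1 : Matrix (Fin n) (Fin n) F) := by
      funext i j
      show B.coord (idx j) (u i) = (1 : Matrix (Fin n) (Fin n) F) i j
      rw [← hB i, Module.Basis.coord_apply, B.repr_self, Finsupp.single_apply, Matrix.one_apply]
      simp [hidx.eq_iff, eq_comm]
    show Matrix.detRowAlternating (fun i => g (u i)) = 1
    rw [hmat]
    show Matrix.det (1 : Matrix (Fin n) (Fin n) F) = 1
    exact Matrix.det_one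
  let fam : ∀ i, W [⋀^Fin i]→ₗ[F] F :=
    Function.update (fun i => (0 : W [⋀^Fin i]→ₗ[F] F)) n f
  have h1 : liftAlternating (R := F) (M := W) (N := F) fam (ιMulti F n u) = f u := by
    rw [liftAlternating_apply_ιMulti]
    show (fam n) u = f u
    simp only [fam, Function.update_self]
  rw [h0, map_zero, hfu] at h1
  exact one_ne_zero h1.symm

theorem findep_iff {E : Type} [LinearOrder E] (v : E → W) (X : Finset E) :
    FIndep F v X ↔
      LinearIndependent F (fun i : Fin (X.sort (· ≤ ·)).length =>
        v ((X.sort (· ≤ ·)).get i)) := by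
  set l := X.sort (· ≤ ·) with hldef
  have hinj : Function.Injective l.get := List.nodup_iff_injective_get.mp (X.sort_nodup _)
  have hmem : ∀ i, l.get i ∈ X := fun i => (Finset.mem_sort _).mp (l.get_mem _)
  let e : Fin l.length ≃ {a // a ∈ X} := Equiv.ofBijective (fun i => ⟨l.get i, hmem i⟩)
    ⟨fun i j hij => hinj (congrArg Subtype.val hij),
     fun x => by
      obtain ⟨i, hi⟩ := List.mem_iff_get.mp ((Finset.mem_sort (α := E) (· ≤ ·)).mpr x.2)
      exact ⟨i, Subtype.ext hi⟩⟩
  rw [FIndep, ← linearIndependent_equiv e (f := fun x : {a // a ∈ X} => v x.1)]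
  rfl

theorem wedge_eq_zero_of_not_findep {E : Type} [LinearOrder E] {v : E → W} {X : Finset E}
    (h : ¬ FIndep F v X) : wedge F v X = 0 := by
  rw [wedge, lw_eq_iMulti]
  exact AlternatingMap.map_linearDependent _ _ (fun hli => h ((findep_iff v X).mpr hli))

theorem wedge_ne_zero_of_findep {E : Type} [LinearOrder E] {v : E → W} {X : Finset E}
    (h : FIndep F v X) : wedge F v X ≠ 0 := by
  rw [wedge, lw_eq_iMulti]
  exact iMulti_ne_zero ((findep_iff v X).mp h)

theorem iMulti_mem_span {s d : ℕ} (b : Fin d → W) (c : Fin s → Fin d → F) :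
    ιMulti F s (fun i => ∑ j, c i j • b j) ∈
      Submodule.span F (Set.range (fun A : {A : Finset (Fin d) // A.card = s} =>
        ιMulti F s (fun i => b ((A.1.orderIsoOfFin A.2) i : Fin d)))) := by
  classical
  rw [show (ιMulti F s) (fun i => ∑ j, c i j • b j)
      = ∑ r : Fin s → Fin d, ιMulti F s (fun i => c i (r i) • b (r i)) from
    (ιMulti F s (M := W)).toMultilinearMap.map_sum (fun i j => c i j • b j)]
  apply Submodule.sum_mem
  intro r _
  rw [show (ιMulti F s) (fun i => c i (r i) • b (r i))
      = (∏ i, c i (r i)) • ιMulti F s (fun i => b (r i)) from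
    (ιMulti F s (M := W)).toMultilinearMap.map_smul_univ _ _]
  apply Submodule.smul_mem
  by_cases hr : Function.Injective r
  · set A : Finset (Fin d) := Finset.image r Finset.univ with hA
    have hAc : A.card = s := by
      rw [hA, Finset.card_image_of_injective _ hr, Finset.card_univ, Fintype.card_fin]
    have h₂ : Function.Injective (fun i : Fin s => ((A.orderIsoOfFin hAc) i : Fin d)) :=
      fun i j hij => (A.orderIsoOfFin hAc).injective (Subtype.ext hij)
    have hrange : Set.range r
        = Set.range (fun i : Fin s => ((A.orderIsoOfFin hAc) i : Fin d)) := by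
      ext x
      constructor
      · rintro ⟨i, rfl⟩
        have hx : r i ∈ A := Finset.mem_image_of_mem r (Finset.mem_univ i)
        exact ⟨(A.orderIsoOfFin hAc).symm ⟨r i, hx⟩, by simp⟩
      · rintro ⟨i, rfl⟩
        have hx : ((A.orderIsoOfFin hAc) i : Fin d) ∈ A := ((A.orderIsoOfFin hAc) i).2
        obtain ⟨j, -, hj⟩ := Finset.mem_image.mp hx
        exact ⟨j, hj⟩
    obtain ⟨cσ, hcσ⟩ := iMulti_comp_perm_congr (F := F) b hr h₂ hrange
    rw [hcσ]
    exact Submodule.smul_mem _ _ (Submodule.subset_span ⟨⟨A, hAc⟩, rfl⟩)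
  · obtain ⟨i, j, hij, hne⟩ := Function.not_injective_iff.mp hr
    rw [AlternatingMap.map_eq_zero_of_eq (ιMulti F s (M := W)) (fun i => b (r i))
      (congrArg b hij) hne]
    exact Submodule.zero_mem _

end RepAux


/-- representative sets lemma.  Let `M` be a matroid of rank at
most `r+s`, representable over a field `F` via vectors `v : E → W`, and let `𝒴` be a
collection of `s`-element independent sets.  Then some subfamily `𝒴' ⊆ 𝒴` with
`|𝒴'| ≤ binom(r+s, s)` represents `𝒴`: whenever some `Y ∈ 𝒴` extends an independent
set `X` (i.e. `X ∩ Y = ∅` and `X ∪ Y` is independent), some `Y' ∈ 𝒴'` does too. -/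
theorem representative_sets_lemma
    (F : Type) [Field F] (W : Type) [AddCommGroup W] [Module F W]
    (E : Type) [Fintype E] [DecidableEq E] (v : E → W) (r s : ℕ)
    (hrank : Module.finrank F (Submodule.span F (Set.range v)) ≤ r + s)
    (𝒴 : Finset (Finset E))
    (h𝒴 : ∀ Y ∈ 𝒴, Y.card = s ∧ FIndep F v Y) :
    ∃ 𝒴' ⊆ 𝒴, 𝒴'.card ≤ (r + s).choose s ∧
      ∀ X : Finset E, FIndep F v X →
        (∃ Y ∈ 𝒴, Disjoint X Y ∧ FIndep F v (X ∪ Y)) →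
        (∃ Y' ∈ 𝒴', Disjoint X Y' ∧ FIndep F v (X ∪ Y')) := by
  classical
  letI : LinearOrder E := LinearOrder.lift' (Fintype.equivFin E) (Fintype.equivFin E).injective
  set W' := Submodule.span F (Set.range v) with hW'def
  haveI : FiniteDimensional F W' := FiniteDimensional.span_of_finite F (Set.finite_range v)
  set d := Module.finrank F W' with hddef
  let B : Module.Basis (Fin d) F W' := Module.finBasis F W'
  let b : Fin d → W := fun j => ((B j : W') : W)
  let gB : {A : Finset (Fin d) // A.card = s} → ExteriorAlgebra F W :=
    fun A => ExteriorAlgebra.ιMulti F s (fun i => b ((A.1.orderIsoOfFin A.2) i : Fin d))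
  set P := Submodule.span F (Set.range gB) with hPdef
  haveI : FiniteDimensional F P := FiniteDimensional.span_of_finite F (Set.finite_range gB)
  have hve : ∀ e : E, v e ∈ W' := fun e => Submodule.subset_span ⟨e, rfl⟩
  have hrepr : ∀ e : E, v e = ∑ j, (B.repr ⟨v e, hve e⟩) j • b j := by
    intro e
    conv_lhs => rw [show v e = ((⟨v e, hve e⟩ : W') : W) from rfl, ← B.sum_repr ⟨v e, hve e⟩]
    simp only [b, Submodule.coe_sum, Submodule.coe_smul]
  have hwedgeP : ∀ Y : Finset E, Y.card = s → RepAux.wedge F v Y ∈ P := by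
    intro Y hYc
    have hlen : (Y.sort (· ≤ ·)).length = s := by
      rw [Finset.length_sort]; exact hYc
    rw [RepAux.wedge, RepAux.lw_eq_iMulti_of_length v _ hlen]
    have hfe : (fun i : Fin s => v ((Y.sort (· ≤ ·)).get (Fin.cast hlen.symm i)))
        = fun i : Fin s => ∑ j,
            (B.repr ⟨v ((Y.sort (· ≤ ·)).get (Fin.cast hlen.symm i)), hve _⟩) j • b j := by
      funext i; exact hrepr _
    rw [hfe]
    exact RepAux.iMulti_mem_span b _
  have hrankP : Module.finrank F P ≤ (r + s).choose s := by
    have h1 : Module.finrank F P ≤ Fintype.card {A : Finset (Fin d) // A.card = s} :=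
      finrank_range_le_card gB
    have h2 : Fintype.card {A : Finset (Fin d) // A.card = s} = d.choose s := by
      rw [Fintype.card_finset_len, Fintype.card_fin]
    exact (h1.trans_eq h2).trans (Nat.choose_le_choose s hrank)
  set 𝒲 : Set (ExteriorAlgebra F W) := ↑(𝒴.image (RepAux.wedge F v)) with h𝒲
  obtain ⟨bs, hsub, hspan, hind⟩ := exists_linearIndependent F 𝒲
  have hmem𝒲 : ∀ x ∈ 𝒲, ∃ Y ∈ 𝒴, RepAux.wedge F v Y = x := by
    intro x hx
    rw [h𝒲, Finset.mem_coe, Finset.mem_image] at hx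
    obtain ⟨Y, hY, hYx⟩ := hx
    exact ⟨Y, hY, hYx⟩
  have hbsfin : bs.Finite :=
    Set.Finite.subset (𝒴.image (RepAux.wedge F v)).finite_toSet hsub
  have hbsP : ∀ x ∈ bs, x ∈ P := by
    intro x hx
    obtain ⟨Y, hY, rfl⟩ := hmem𝒲 x (hsub hx)
    exact hwedgeP Y (h𝒴 Y hY).1
  haveI := hbsfin.fintype
  have hcard_bs : hbsfin.toFinset.card ≤ Module.finrank F P := by
    have hliP : LinearIndependent F (fun x : bs => (⟨x.1, hbsP x.1 x.2⟩ : P)) := by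
      apply LinearIndependent.of_comp P.subtype
      exact hind
    have hc := hliP.fintype_card_le_finrank
    rwa [Set.Finite.card_toFinset]
  let ch : ExteriorAlgebra F W → Finset E := fun x =>
    if h : ∃ Y ∈ 𝒴, RepAux.wedge F v Y = x then h.choose else ∅
  have hch : ∀ x ∈ bs, ch x ∈ 𝒴 ∧ RepAux.wedge F v (ch x) = x := by
    intro x hx
    have h := hmem𝒲 x (hsub hx)
    simp only [ch, dif_pos h]
    exact ⟨h.choose_spec.1, h.choose_spec.2⟩
  refine ⟨hbsfin.toFinset.image ch, ?_, ?_, ?_⟩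
  · intro Z hZ
    rw [Finset.mem_image] at hZ
    obtain ⟨x, hx, rfl⟩ := hZ
    exact (hch x (hbsfin.mem_toFinset.mp hx)).1
  · exact Finset.card_image_le.trans (hcard_bs.trans hrankP)
  · intro X hX hex
    obtain ⟨Y, hY𝒴, hdisj, hXY⟩ := hex
    have h1 : RepAux.wedge F v X * RepAux.wedge F v Y ≠ 0 := by
      obtain ⟨c, hc⟩ := RepAux.wedge_mul_wedge (F := F) v hdisj
      rw [hc]
      intro h0
      exact RepAux.wedge_ne_zero_of_findep hXY (RepAux.eq_zero_of_unit_smul c h0)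
    have h2 : RepAux.wedge F v Y ∈ Submodule.span F bs := by
      rw [hspan]
      exact Submodule.subset_span
        (by rw [h𝒲]; exact Finset.mem_coe.mpr (Finset.mem_image_of_mem _ hY𝒴))
    have key : ∃ x ∈ bs, RepAux.wedge F v X * x ≠ 0 := by
      by_contra hcon
      push_neg at hcon
      have hker : Submodule.span F bs
          ≤ LinearMap.ker (LinearMap.mulLeft F (RepAux.wedge F v X)) :=
        Submodule.span_le.mpr fun x hx => LinearMap.mem_ker.mpr (hcon x hx)
      exact h1 (LinearMap.mem_ker.mp (hker h2))
    obtain ⟨x, hxbs, hxne⟩ := key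
    obtain ⟨hch1, hch2⟩ := hch x hxbs
    rw [← hch2] at hxne
    have hdisj' : Disjoint X (ch x) := by
      rw [Finset.disjoint_left]
      intro a haX hax
      exact absurd (RepAux.wedge_mul_wedge_eq_zero (F := F) v haX hax) hxne
    obtain ⟨c, hc⟩ := RepAux.wedge_mul_wedge (F := F) v hdisj'
    have hne' : RepAux.wedge F v (X ∪ ch x) ≠ 0 := by
      intro h0
      apply hxne
      rw [hc, h0, smul_zero]
    refine ⟨ch x, Finset.mem_image_of_mem ch (hbsfin.mem_toFinset.mpr hxbs), hdisj', ?_⟩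
    by_contra hnf
    exact hne' (RepAux.wedge_eq_zero_of_not_findep hnf)
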